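/- Fix integers 1 ≤ r ≤ n and work over ℂ[q]. Set c := (−1)^{r−1}·q. Let f ∈ ℂ[q][x₁,…,x_r] be such that for every permutation w ∈ S_r (acting by permuting the variables x₁,…,x_r), the polynomial w·f − sgn(w)·f lies in the ideal I_P(c) generated by x₁^n − c, …, x_r^n − c. Then there exists P ∈ ℂ[q][x₁,…,x_r], symmetric in x₁,…,x_r, such that f − P·Δ ∈ I_P(c). -/

import Mathlib

open Finset MvPolynomial

/-- The Vandermonde determinant `Δ = ∏_{1 ≤ i < j ≤ r} (xᵢ - xⱼ)`. -/
noncomputable def vander (R : Type*) [CommRing R] (r : ℕ) : MvPolynomial (Fin r) R :=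
  ∏ p ∈ Finset.univ.filter (fun p : Fin r × Fin r => p.1 < p.2), (X p.1 - X p.2)

/-- The ideal `I_P(c) = ⟨x₁ⁿ - c, …, x_rⁿ - c⟩` of `R[x₁,…,x_r]`. -/
noncomputable def IP (R : Type*) [CommRing R] (r n : ℕ) (c : R) :
    Ideal (MvPolynomial (Fin r) R) :=
  Ideal.span (Set.range fun i : Fin r => X i ^ n - C c)

section Aux

/-- `X a - X b` is prime in a multivariate polynomial ring over a domain. -/
lemma prime_X_sub_X {R : Type*} [CommRing R] [IsDomain R] :
    ∀ {r : ℕ} {a b : Fin r}, a ≠ b → Prime (X a - X b : MvPolynomial (Fin r) R) := by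
  intro r
  match r with
  | 0 => exact fun {a} _ _ => a.elim0
  | 1 => exact fun {a b} h => absurd (Subsingleton.elim a b) h
  | (m+2) =>
    intro a b hab
    have h10 : Prime (X 1 - X 0 : MvPolynomial (Fin (m+2)) R) := by
      rw [← MulEquiv.prime_iff (finSuccEquiv R (m+1)).toMulEquiv]
      have h1 : (finSuccEquiv R (m+1)).toMulEquiv (X 1 - X 0 : MvPolynomial (Fin (m+2)) R)
          = -(Polynomial.X - Polynomial.C (X 0)) := by
        show (finSuccEquiv R (m+1)) (X 1 - X 0 : MvPolynomial (Fin (m+2)) R) = _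
        have : (1 : Fin (m+2)) = Fin.succ 0 := rfl
        rw [map_sub, this, finSuccEquiv_X_succ, finSuccEquiv_X_zero]
        ring
      rw [h1]
      exact (Polynomial.prime_X_sub_C _).neg
    have hb : Equiv.swap (0 : Fin (m+2)) b 0 = b := Equiv.swap_apply_left _ _
    set s := Equiv.swap (0 : Fin (m+2)) b with hs
    set t := Equiv.swap (1 : Fin (m+2)) (s.symm a) with ht
    set σ := t.trans s with hσ
    have h0 : σ 0 = b := by
      have ht0 : t 0 = 0 := by
        apply Equiv.swap_apply_of_ne_of_ne
        · exact zero_ne_one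
        · intro h
          apply hab
          have := congrArg s h
          simpa [Equiv.apply_symm_apply, hb] using this.symm
      simp [hσ, Equiv.trans_apply, ht0, hb]
    have h1' : σ 1 = a := by
      simp [hσ, ht, Equiv.trans_apply, Equiv.swap_apply_left, Equiv.apply_symm_apply]
    have key : (renameEquiv R σ).toMulEquiv (X 1 - X 0 : MvPolynomial (Fin (m+2)) R)
        = X a - X b := by
      show rename σ (X 1 - X 0 : MvPolynomial (Fin (m+2)) R) = _
      rw [map_sub, rename_X, rename_X, h0, h1']
    rw [← key]
    exact (MulEquiv.prime_iff (renameEquiv R σ).toMulEquiv).mpr h10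

lemma prod_filter_lt {A : Type*} [CommMonoid A] {r : ℕ} (f : Fin r → Fin r → A) :
    ∏ p ∈ Finset.univ.filter (fun p : Fin r × Fin r => p.1 < p.2), f p.1 p.2
      = ∏ i : Fin r, ∏ j ∈ Ioi i, f i j := by
  rw [Finset.prod_sigma']
  exact Finset.prod_nbij' (f := fun p : Fin r × Fin r => f p.1 p.2)
    (g := fun p : (Σ _ : Fin r, Fin r) => f p.1 p.2)
    (fun p => ⟨p.1, p.2⟩) (fun p => (p.1, p.2))
    (by simp [Finset.mem_sigma]) (by simp) (by simp) (by simp) (by simp)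

lemma vander_eq_det (R : Type*) [CommRing R] (r : ℕ) :
    vander R r = (-1) ^ (Finset.univ.filter (fun p : Fin r × Fin r => p.1 < p.2)).card *
      (Matrix.vandermonde (fun i : Fin r => (X i : MvPolynomial (Fin r) R))).det := by
  rw [Matrix.det_vandermonde, ← prod_filter_lt (fun i j => (X j - X i : MvPolynomial (Fin r) R))]
  rw [vander, ← Finset.prod_const, ← Finset.prod_mul_distrib]
  apply Finset.prod_congr rfl
  intro p _
  ring

/-- The Vandermonde polynomial is alternating. -/
lemma rename_vander {R : Type*} [CommRing R] {r : ℕ} (w : Equiv.Perm (Fin r)) :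
    rename (⇑w) (vander R r) = ((Equiv.Perm.sign w : ℤ)) • vander R r := by
  have hdet : rename (⇑w) (Matrix.vandermonde (fun i : Fin r => (X i : MvPolynomial (Fin r) R))).det
      = ((Equiv.Perm.sign w : ℤ)) •
        (Matrix.vandermonde (fun i : Fin r => (X i : MvPolynomial (Fin r) R))).det := by
    have h1 : ((rename (⇑w) : MvPolynomial (Fin r) R →ₐ[R] MvPolynomial (Fin r) R) :
        MvPolynomial (Fin r) R →+* MvPolynomial (Fin r) R).mapMatrix
          (Matrix.vandermonde (fun i : Fin r => (X i : MvPolynomial (Fin r) R)))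
        = (Matrix.vandermonde
            (fun i : Fin r => (X i : MvPolynomial (Fin r) R))).submatrix ⇑w id := by
      ext i j
      simp [Matrix.vandermonde]
    calc rename (⇑w) (Matrix.vandermonde (fun i : Fin r => (X i : MvPolynomial (Fin r) R))).det
        = ((Matrix.vandermonde
            (fun i : Fin r => (X i : MvPolynomial (Fin r) R))).submatrix ⇑w id).det := by
          rw [← h1]
          exact RingHom.map_det _ _
      _ = _ := by
          rw [Matrix.det_permute]
          simp [zsmul_eq_mul]
  rw [vander_eq_det, map_mul, hdet]
  have : rename (⇑w) ((-1 : MvPolynomial (Fin r) R) ^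
      (Finset.univ.filter (fun p : Fin r × Fin r => p.1 < p.2)).card)
      = (-1) ^ (Finset.univ.filter (fun p : Fin r × Fin r => p.1 < p.2)).card := by
    simp
  rw [this, mul_smul_comm]

lemma Prime.isRelPrime_of_not_dvd' {α : Type*} [CommMonoidWithZero α] [IsCancelMulZero α] {p q : α}
    (hp : Prime p) (h : ¬ p ∣ q) : IsRelPrime p q := by
  intro d hdp hdq
  obtain ⟨e, rfl⟩ := hdp
  rcases hp.irreducible.isUnit_or_isUnit (rfl : d * e = d * e) with h1 | h1
  · exact h1
  · exfalso
    apply h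
    obtain ⟨u, rfl⟩ := h1
    have h3 : (d * (u : α)) ∣ d :=
      ⟨((u⁻¹ : αˣ) : α), by rw [mul_assoc, Units.mul_inv, mul_one]⟩
    exact h3.trans hdq

end Aux

/-- Image characterization of `θ̄` from Section 2: working over `ℂ[q]` with
`c = (-1)^{r-1} q`, if `f ∈ ℂ[q][x₁,…,x_r]` is anti-symmetric modulo
`I_P(c) = ⟨x₁ⁿ - c, …, x_rⁿ - c⟩` (i.e. for every permutation `w` of the variables
`w·f - sgn(w)·f ∈ I_P(c)`), then there exists a polynomial `P`, symmetric in
`x₁, …, x_r`, with `f - P·Δ ∈ I_P(c)`. -/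
theorem thetabar_image (n r : ℕ) (hr : 1 ≤ r) (hrn : r ≤ n)
    (f : MvPolynomial (Fin r) (Polynomial ℂ))
    (hf : ∀ w : Equiv.Perm (Fin r),
      rename (⇑w) f - ((Equiv.Perm.sign w : ℤ) : ℤ) • f ∈
        IP (Polynomial ℂ) r n ((-1) ^ (r - 1) * Polynomial.X)) :
    ∃ P : MvPolynomial (Fin r) (Polynomial ℂ), P.IsSymmetric ∧
      f - P * vander (Polynomial ℂ) r ∈
        IP (Polynomial ℂ) r n ((-1) ^ (r - 1) * Polynomial.X) := by
  classical
  set I := IP (Polynomial ℂ) r n ((-1) ^ (r - 1) * Polynomial.X) with hI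
  -- the antisymmetrization (without the 1/r! factor)
  set S : MvPolynomial (Fin r) (Polynomial ℂ) :=
    ∑ w : Equiv.Perm (Fin r), ((Equiv.Perm.sign w : ℤ)) • rename ⇑w f with hS
  -- `S` is alternating
  have hSalt : ∀ v : Equiv.Perm (Fin r),
      rename ⇑v S = ((Equiv.Perm.sign v : ℤ)) • S := by
    intro v
    rw [hS, map_sum]
    have step : ∀ w : Equiv.Perm (Fin r),
        rename ⇑v (((Equiv.Perm.sign w : ℤ)) • rename ⇑w f)
          = ((Equiv.Perm.sign w : ℤ)) • rename ⇑(v * w) f := by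
      intro w
      rw [map_zsmul, rename_rename]
      rfl
    simp_rw [step]
    have reidx : ∑ w : Equiv.Perm (Fin r), ((Equiv.Perm.sign w : ℤ)) • rename ⇑(v * w) f
        = ∑ u : Equiv.Perm (Fin r), ((Equiv.Perm.sign (v⁻¹ * u) : ℤ)) • rename ⇑u f := by
      apply Fintype.sum_equiv (Equiv.mulLeft v)
      intro w
      simp
    rw [reidx, Finset.smul_sum]
    apply Finset.sum_congr rfl
    intro u _
    rw [smul_smul]
    congr 1
    rw [map_mul, Equiv.Perm.sign_inv]
    push_cast
    ring
  -- `S ≡ r! • f mod I`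
  have hS_f : S - (r.factorial : ℤ) • f ∈ I := by
    have key : S - (r.factorial : ℤ) • f
        = ∑ w : Equiv.Perm (Fin r),
            ((Equiv.Perm.sign w : ℤ)) • (rename ⇑w f - ((Equiv.Perm.sign w : ℤ)) • f) := by
      have term : ∀ w : Equiv.Perm (Fin r),
          ((Equiv.Perm.sign w : ℤ)) • (rename ⇑w f - ((Equiv.Perm.sign w : ℤ)) • f)
            = ((Equiv.Perm.sign w : ℤ)) • rename ⇑w f - f := by
        intro w
        rw [smul_sub, smul_smul]
        congr 2
        have : ((Equiv.Perm.sign w : ℤ)) * ((Equiv.Perm.sign w : ℤ))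
            = (((Equiv.Perm.sign w * Equiv.Perm.sign w : ℤˣ)) : ℤ) := by push_cast; ring
        rw [this, Int.units_mul_self]
        simp
      simp_rw [term]
      rw [Finset.sum_sub_distrib, ← hS, Finset.sum_const]
      congr 1
      simp [Fintype.card_perm, Fintype.card_fin]
    rw [key]
    apply Ideal.sum_mem
    intro w _
    exact zsmul_mem (hf w) _
  have hrfac : (r.factorial : ℚ) ≠ 0 := by
    exact_mod_cast r.factorial_ne_zero
  -- the ideal is stable under ℚ-scalars
  have qsmul_mem : ∀ (c : ℚ) {x : MvPolynomial (Fin r) (Polynomial ℂ)}, x ∈ I → c • x ∈ I := by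
    intro c x hx
    rw [Algebra.smul_def]
    exact I.mul_mem_left _ hx
  -- `rename` is ℚ-linear
  have rename_qsmul : ∀ (v : Equiv.Perm (Fin r)) (c : ℚ)
      (x : MvPolynomial (Fin r) (Polynomial ℂ)),
      rename ⇑v (c • x) = c • rename ⇑v x := by
    intro v c x
    rw [Algebra.smul_def, map_mul, Algebra.smul_def]
    congr 1
    rw [IsScalarTower.algebraMap_apply ℚ (Polynomial ℂ) (MvPolynomial (Fin r) (Polynomial ℂ)),
      MvPolynomial.algebraMap_eq, rename_C]
  -- the honest antisymmetrization
  set g : MvPolynomial (Fin r) (Polynomial ℂ) := (r.factorial : ℚ)⁻¹ • S with hg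
  have hfg : f - g ∈ I := by
    have e1 : f - g = (r.factorial : ℚ)⁻¹ • ((r.factorial : ℤ) • f - S) := by
      rw [smul_sub, hg]
      congr 1
      rw [← Int.cast_smul_eq_zsmul ℚ, smul_smul]
      push_cast
      rw [inv_mul_cancel₀ hrfac, one_smul]
    rw [e1]
    exact qsmul_mem _ (by simpa using I.neg_mem hS_f)
  have hgalt : ∀ v : Equiv.Perm (Fin r),
      rename ⇑v g = ((Equiv.Perm.sign v : ℤ)) • g := by
    intro v
    rw [hg, rename_qsmul, hSalt v, smul_comm]
  -- divisibility of `g` by each `X i - X j`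
  have hdvd : ∀ p ∈ Finset.univ.filter (fun p : Fin r × Fin r => p.1 < p.2),
      (X p.1 - X p.2 : MvPolynomial (Fin r) (Polynomial ℂ)) ∣ g := by
    intro p hp
    have hij : p.1 < p.2 := (Finset.mem_filter.mp hp).2
    have hne : p.1 ≠ p.2 := ne_of_lt hij
    set φ : MvPolynomial (Fin r) (Polynomial ℂ) →ₐ[Polynomial ℂ]
        MvPolynomial (Fin r) (Polynomial ℂ) :=
      aeval (fun m => if m = p.2 then X p.1 else X m) with hφ
    have hφswap : φ.comp (rename ⇑(Equiv.swap p.1 p.2)) = φ := by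
      apply MvPolynomial.algHom_ext
      intro m
      simp only [AlgHom.comp_apply, rename_X, hφ, aeval_X]
      rcases eq_or_ne m p.1 with rfl | hmi
      · rw [Equiv.swap_apply_left]
        simp [hne]
      rcases eq_or_ne m p.2 with rfl | hmj
      · rw [Equiv.swap_apply_right]
        simp [hne]
      · rw [Equiv.swap_apply_of_ne_of_ne hmi hmj]
    have hφg : φ g = 0 := by
      have h1 : φ g = - φ g := by
        conv_lhs => rw [← DFunLike.congr_fun hφswap g]
        rw [AlgHom.comp_apply, hgalt (Equiv.swap p.1 p.2), Equiv.Perm.sign_swap hne]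
        simp
      have h2 : (2 : MvPolynomial (Fin r) (Polynomial ℂ)) * φ g = 0 := by
        rw [two_mul]
        nth_rewrite 1 [h1]
        ring
      rcases mul_eq_zero.mp h2 with h | h
      · exact absurd h two_ne_zero
      · exact h
    set J : Ideal (MvPolynomial (Fin r) (Polynomial ℂ)) :=
      Ideal.span {(X p.1 - X p.2 : MvPolynomial (Fin r) (Polynomial ℂ))} with hJ
    have hmk : (Ideal.Quotient.mkₐ (Polynomial ℂ) J).comp φ
        = Ideal.Quotient.mkₐ (Polynomial ℂ) J := by
      apply MvPolynomial.algHom_ext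
      intro m
      simp only [AlgHom.comp_apply, hφ, aeval_X, Ideal.Quotient.mkₐ_eq_mk]
      rcases eq_or_ne m p.2 with rfl | hmj
      · rw [if_pos rfl, Ideal.Quotient.mk_eq_mk_iff_sub_mem]
        exact Ideal.subset_span rfl
      · rw [if_neg hmj]
    have hzero : Ideal.Quotient.mk J g = 0 := by
      have := DFunLike.congr_fun hmk g
      simp only [AlgHom.comp_apply, Ideal.Quotient.mkₐ_eq_mk] at this
      rw [← this, hφg, map_zero]
    rw [Ideal.Quotient.eq_zero_iff_mem, hJ, Ideal.mem_span_singleton] at hzero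
    exact hzero
  -- the factors are pairwise relatively prime
  have hpair : (↑(Finset.univ.filter (fun p : Fin r × Fin r => p.1 < p.2)) :
      Set (Fin r × Fin r)).Pairwise
      ((Function.onFun IsRelPrime fun p : Fin r × Fin r =>
        (X p.1 - X p.2 : MvPolynomial (Fin r) (Polynomial ℂ)))) := by
    intro p hp q hq hpq
    simp only [Finset.coe_filter, Set.mem_setOf_eq] at hp hq
    have hpd : p.1 < p.2 := hp.2
    have hqd : q.1 < q.2 := hq.2
    apply Prime.isRelPrime_of_not_dvd' (prime_X_sub_X (ne_of_lt hpd))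
    -- find a coordinate of q not among p's
    have ht : ∃ t : Fin r, (t = q.1 ∨ t = q.2) ∧ t ≠ p.1 ∧ t ≠ p.2 := by
      by_cases h1 : q.1 ≠ p.1 ∧ q.1 ≠ p.2
      · exact ⟨q.1, Or.inl rfl, h1⟩
      by_cases h2 : q.2 ≠ p.1 ∧ q.2 ≠ p.2
      · exact ⟨q.2, Or.inr rfl, h2⟩
      exfalso
      push_neg at h1 h2
      apply hpq
      rcases eq_or_ne q.1 p.1 with hq1 | hq1
      · rcases eq_or_ne q.2 p.1 with hq2 | hq2
        · exact absurd (hq1 ▸ hq2 ▸ hqd) (lt_irrefl _)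
        · have := h2 hq2
          exact Prod.ext hq1.symm this.symm
      · have hq1' := h1 hq1
        rcases eq_or_ne q.2 p.1 with hq2 | hq2
        · exact absurd (hq2 ▸ hq1' ▸ hqd) (not_lt.mpr (le_of_lt hpd))
        · have hq2' := h2 hq2
          exact absurd (hq2' ▸ hq1' ▸ hqd) (lt_irrefl _)
    obtain ⟨t, hmem, ht1, ht2⟩ := ht
    intro hdvd'
    set v : Fin r → Polynomial ℂ := fun m => if m = t then 1 else 0 with hv
    have h0 : eval v (X p.1 - X p.2 : MvPolynomial (Fin r) (Polynomial ℂ)) = 0 := by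
      simp [hv, ht1.symm, ht2.symm, (by simpa [eq_comm] using ht1 : ¬ p.1 = t),
        (by simpa [eq_comm] using ht2 : ¬ p.2 = t)]
    have h1 : eval v (X q.1 - X q.2 : MvPolynomial (Fin r) (Polynomial ℂ)) ≠ 0 := by
      have hqne : q.1 ≠ q.2 := ne_of_lt hqd
      rcases hmem with rfl | rfl
      · simp [hv, hqne.symm]
      · simp [hv, hqne]
    apply h1
    have := (eval v :
        MvPolynomial (Fin r) (Polynomial ℂ) →+* Polynomial ℂ).map_dvd hdvd'
    change eval v (X p.1 - X p.2 : MvPolynomial (Fin r) (Polynomial ℂ)) ∣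
      eval v (X q.1 - X q.2 : MvPolynomial (Fin r) (Polynomial ℂ)) at this
    rw [h0] at this
    exact (zero_dvd_iff.mp this)
  -- vander divides g
  have hvd : vander (Polynomial ℂ) r ∣ g := by
    rw [vander]
    exact Finset.prod_dvd_of_isRelPrime hpair hdvd
  obtain ⟨P, hP⟩ := hvd
  have hvne : vander (Polynomial ℂ) r ≠ 0 := by
    rw [vander]
    rw [Finset.prod_ne_zero_iff]
    intro p hp
    exact (prime_X_sub_X (ne_of_lt (Finset.mem_filter.mp hp).2)).ne_zero
  have hsymP : P.IsSymmetric := by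
    intro w
    have h1 : ((Equiv.Perm.sign w : ℤ)) • g
        = ((Equiv.Perm.sign w : ℤ)) • (vander (Polynomial ℂ) r * rename ⇑w P) := by
      rw [← hgalt w, hP, map_mul, rename_vander, smul_mul_assoc]
    have h2 : g = vander (Polynomial ℂ) r * rename ⇑w P := by
      have := congrArg (fun x => ((Equiv.Perm.sign w : ℤ)) • x) h1
      simpa [smul_smul, ← Units.val_mul, Int.units_mul_self] using this
    rw [hP] at h2
    exact (mul_left_cancel₀ hvne h2).symm
  refine ⟨P, hsymP, ?_⟩
  have : f - P * vander (Polynomial ℂ) r = f - g := by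
    rw [hP]; ring
  rw [this]
  exact hfg
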